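/- Let A ∈ ℝ with cos(Aπ) ≠ 0, let k > 0 with sin(kπ) ≠ 0, and let (α_j)_{j∈ℤ} be real numbers. Suppose ψ, φ : ℝ → ℂ are continuous, and for every j ∈ ℤ: ψ and φ are twice differentiable on the open interval (jπ, (j+1)π) where they satisfy ψ″ + 2iAψ′ + (k² − A²)ψ = 0 and φ″ − 2iAφ′ + (k² − A²)φ = 0; the one-sided derivatives ψ′(jπ⁺), ψ′(jπ⁻), φ′(jπ⁺), φ′(jπ⁻) exist; ψ(jπ) = φ(jπ); and ψ′(jπ⁺) + φ′(jπ⁺) − ψ′(jπ⁻) − φ′(jπ⁻) = α_j·ψ(jπ). Then for every j ∈ ℤ: ψ((j+1)π) + ψ((j−1)π) = 2·ξ_j(k)·ψ(jπ), where ξ_j(k) = (1/cos(Aπ))(cos(kπ) + (α_j/(4k))·sin(kπ)). -/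

import Mathlib

open scoped Real
open Set Complex

lemma const_on_Ioo {f : ℝ → ℂ} {a b : ℝ}
    (h : ∀ x ∈ Set.Ioo a b, HasDerivAt f 0 x) {x y : ℝ}
    (hx : x ∈ Set.Ioo a b) (hy : y ∈ Set.Ioo a b) : f x = f y := by
  apply (convex_Ioo a b).is_const_of_fderivWithin_eq_zero
    (fun z hz => ((h z hz).differentiableAt).differentiableWithinAt) ?_ hx hy
  intro z hz
  rw [fderivWithin_of_isOpen isOpen_Ioo hz, (h z hz).hasFDerivAt.fderiv]
  ext
  simp

/-- Transfer relation for `u'' + k² u = 0` on `(a,b)`. -/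
lemma transfer0 (k : ℝ) (hk : 0 < k) (a b : ℝ) (hab : a < b) (u : ℝ → ℂ)
    (hu : Continuous u) (Da Db : ℂ)
    (hode : ∀ x ∈ Set.Ioo a b, DifferentiableAt ℝ u x ∧ DifferentiableAt ℝ (deriv u) x ∧
      deriv (deriv u) x + (k : ℂ) ^ 2 * u x = 0)
    (ha : HasDerivWithinAt u Da (Set.Ioi a) a)
    (hb : HasDerivWithinAt u Db (Set.Iio b) b) :
    u b = u a * (Real.cos (k * (b - a)) : ℂ) + Da / k * (Real.sin (k * (b - a)) : ℂ) ∧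
    Db = -(k : ℂ) * u a * (Real.sin (k * (b - a)) : ℂ) + Da * (Real.cos (k * (b - a)) : ℂ) := by
  set c : ℝ → ℂ := fun x => Complex.cos ((k : ℂ) * ((x : ℂ) - (a : ℂ))) with hc_def
  set s : ℝ → ℂ := fun x => Complex.sin ((k : ℂ) * ((x : ℂ) - (a : ℂ))) with hs_def
  have hlin : ∀ z : ℂ, HasDerivAt (fun w : ℂ => (k : ℂ) * (w - (a : ℂ))) (k : ℂ) z := by
    intro z
    simpa using ((hasDerivAt_id z).sub_const (a : ℂ)).const_mul (k : ℂ)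
  have hc : ∀ x : ℝ, HasDerivAt c (-(k : ℂ) * s x) x := by
    intro x
    have h1 : HasDerivAt (fun w : ℂ => Complex.cos ((k : ℂ) * (w - (a : ℂ))))
        (-Complex.sin ((k : ℂ) * ((x : ℂ) - (a : ℂ))) * (k : ℂ)) (x : ℂ) :=
      (Complex.hasDerivAt_cos _).comp _ (hlin _)
    have := h1.comp_ofReal
    simpa [hc_def, hs_def, mul_comm] using this
  have hs : ∀ x : ℝ, HasDerivAt s ((k : ℂ) * c x) x := by
    intro x
    have h1 : HasDerivAt (fun w : ℂ => Complex.sin ((k : ℂ) * (w - (a : ℂ))))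
        (Complex.cos ((k : ℂ) * ((x : ℂ) - (a : ℂ))) * (k : ℂ)) (x : ℂ) :=
      (Complex.hasDerivAt_sin _).comp _ (hlin _)
    have := h1.comp_ofReal
    simpa [hc_def, hs_def, mul_comm] using this
  have hpyth : ∀ x : ℝ, c x ^ 2 + s x ^ 2 = 1 := by
    intro x; exact Complex.cos_sq_add_sin_sq _
  -- the two Wronskians
  set G : ℝ → ℂ := fun x => (k : ℂ) * u x * c x - deriv u x * s x with hG_def
  set H : ℝ → ℂ := fun x => (k : ℂ) * u x * s x + deriv u x * c x with hH_def
  have hGd : ∀ x ∈ Set.Ioo a b, HasDerivAt G 0 x := by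
    intro x hx
    obtain ⟨h1, h2, h3⟩ := hode x hx
    have hu' : HasDerivAt u (deriv u x) x := h1.hasDerivAt
    have hu'' : HasDerivAt (deriv u) (deriv (deriv u) x) x := h2.hasDerivAt
    have : HasDerivAt G
        (((k : ℂ) * deriv u x * c x + (k : ℂ) * u x * (-(k:ℂ) * s x))
          - (deriv (deriv u) x * s x + deriv u x * ((k : ℂ) * c x))) x :=
      (((hu'.const_mul _).mul (hc x))).sub (hu''.mul (hs x))
    convert this using 1
    linear_combination (s x) * h3
  have hHd : ∀ x ∈ Set.Ioo a b, HasDerivAt H 0 x := by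
    intro x hx
    obtain ⟨h1, h2, h3⟩ := hode x hx
    have hu' : HasDerivAt u (deriv u x) x := h1.hasDerivAt
    have hu'' : HasDerivAt (deriv u) (deriv (deriv u) x) x := h2.hasDerivAt
    have : HasDerivAt H
        (((k : ℂ) * deriv u x * s x + (k : ℂ) * u x * ((k:ℂ) * c x))
          + (deriv (deriv u) x * c x + deriv u x * (-(k : ℂ) * s x))) x :=
      (((hu'.const_mul _).mul (hs x))).add (hu''.mul (hc x))
    convert this using 1
    linear_combination (-(c x)) * h3
  have hmem : (a + b) / 2 ∈ Set.Ioo a b := ⟨by linarith, by linarith⟩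
  set CG : ℂ := G ((a + b) / 2) with hCG_def
  set CH : ℂ := H ((a + b) / 2) with hCH_def
  have hGconst : ∀ x ∈ Set.Ioo a b, G x = CG := fun x hx => const_on_Ioo hGd hx hmem
  have hHconst : ∀ x ∈ Set.Ioo a b, H x = CH := fun x hx => const_on_Ioo hHd hx hmem
  have hkc : (k : ℂ) ≠ 0 := by exact_mod_cast hk.ne'
  set v : ℝ → ℂ := fun x => (CG * c x + CH * s x) / k with hv_def
  have huv : ∀ x ∈ Set.Ioo a b, u x = v x := by
    intro x hx
    have e1 := hGconst x hx
    have e2 := hHconst x hx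
    rw [hG_def] at e1
    rw [hH_def] at e2
    rw [hv_def]
    field_simp
    linear_combination (c x) * e1 + (s x) * e2 - (k : ℂ) * u x * (hpyth x)
  have hccont : Continuous c := by
    apply Complex.continuous_cos.comp
    fun_prop
  have hscont : Continuous s := by
    apply Complex.continuous_sin.comp
    fun_prop
  have hvcont : Continuous v := by
    apply Continuous.div_const
    exact ((continuous_const.mul hccont).add (continuous_const.mul hscont))
  have hEq : Set.EqOn u v (Set.Icc a b) := by
    have := Set.EqOn.closure (fun x hx => huv x hx) hu hvcont
    rwa [closure_Ioo hab.ne] at this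
  have hv' : ∀ x : ℝ, HasDerivAt v (-CG * s x + CH * c x) x := by
    intro x
    have h1 : HasDerivAt (fun x => CG * c x + CH * s x)
        (CG * (-(k : ℂ) * s x) + CH * ((k : ℂ) * c x)) x :=
      ((hc x).const_mul CG).add ((hs x).const_mul CH)
    have h2 := h1.div_const (k : ℂ)
    convert h2 using 1
    on_goal -1 => rw [eq_div_iff hkc]; ring
    all_goals rfl
  have hint : (interior (Set.Ioo a b)).Nonempty := by
    rw [interior_Ioo]; exact Set.nonempty_Ioo.mpr hab
  have haIcc : a ∈ Set.Icc a b := Set.left_mem_Icc.mpr hab.le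
  have hbIcc : b ∈ Set.Icc a b := Set.right_mem_Icc.mpr hab.le
  have hsa : s a = 0 := by rw [hs_def]; simp
  have hca : c a = 1 := by rw [hc_def]; simp
  have hDa : Da = -CG * s a + CH * c a := by
    have hud : UniqueDiffWithinAt ℝ (Set.Ioo a b) a :=
      uniqueDiffWithinAt_convex (convex_Ioo a b) hint (by rw [closure_Ioo hab.ne]; exact haIcc)
    have h1 : HasDerivWithinAt u Da (Set.Ioo a b) a := ha.mono Set.Ioo_subset_Ioi_self
    have h3 : HasDerivWithinAt u (-CG * s a + CH * c a) (Set.Ioo a b) a :=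
      ((hv' a).hasDerivWithinAt).congr (fun y hy => huv y hy) (hEq haIcc)
    exact hud.eq_deriv _ h1 h3
  have hDb : Db = -CG * s b + CH * c b := by
    have hud : UniqueDiffWithinAt ℝ (Set.Ioo a b) b :=
      uniqueDiffWithinAt_convex (convex_Ioo a b) hint (by rw [closure_Ioo hab.ne]; exact hbIcc)
    have h1 : HasDerivWithinAt u Db (Set.Ioo a b) b := hb.mono Set.Ioo_subset_Iio_self
    have h3 : HasDerivWithinAt u (-CG * s b + CH * c b) (Set.Ioo a b) b :=
      ((hv' b).hasDerivWithinAt).congr (fun y hy => huv y hy) (hEq hbIcc)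
    exact hud.eq_deriv _ h1 h3
  have hCHDa : CH = Da := by rw [hDa, hsa, hca]; ring
  have hCGua : CG = (k : ℂ) * u a := by
    have h : u a = (CG * c a + CH * s a) / k := hEq haIcc
    rw [hsa, hca] at h
    field_simp at h
    linear_combination -h
  have hub : u b = (CG * c b + CH * s b) / k := hEq hbIcc
  have hcb : c b = (Real.cos (k * (b - a)) : ℂ) := by
    show Complex.cos ((k : ℂ) * ((b : ℂ) - (a : ℂ))) = _
    rw [show ((k : ℂ) * ((b : ℂ) - (a : ℂ))) = ((k * (b - a) : ℝ) : ℂ) by push_cast; ring,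
      ← Complex.ofReal_cos]
  have hsb : s b = (Real.sin (k * (b - a)) : ℂ) := by
    show Complex.sin ((k : ℂ) * ((b : ℂ) - (a : ℂ))) = _
    rw [show ((k : ℂ) * ((b : ℂ) - (a : ℂ))) = ((k * (b - a) : ℝ) : ℂ) by push_cast; ring,
      ← Complex.ofReal_sin]
  constructor
  · rw [hub, hCHDa, hCGua, hcb, hsb]
    field_simp
  · rw [hDb, hCHDa, hCGua, hcb, hsb]
    ring

/-- Transfer relation for the gauged equation `w'' + 2iBw' + (k²−B²)w = 0` on `(a,b)`. -/
lemma transfer (k B : ℝ) (hk : 0 < k) (a b : ℝ) (hab : a < b) (w : ℝ → ℂ)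
    (hw : Continuous w) (Da Db : ℂ)
    (hode : ∀ x ∈ Set.Ioo a b, DifferentiableAt ℝ w x ∧ DifferentiableAt ℝ (deriv w) x ∧
      deriv (deriv w) x + 2 * Complex.I * (B : ℂ) * deriv w x
        + ((k ^ 2 - B ^ 2 : ℝ) : ℂ) * w x = 0)
    (ha : HasDerivWithinAt w Da (Set.Ioi a) a)
    (hb : HasDerivWithinAt w Db (Set.Iio b) b) :
    Complex.exp (Complex.I * B * b) * w b
      = Complex.exp (Complex.I * B * a) * (w a * (Real.cos (k * (b - a)) : ℂ)
        + (Da + Complex.I * B * w a) / k * (Real.sin (k * (b - a)) : ℂ)) ∧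
    Complex.exp (Complex.I * B * b) * (Db + Complex.I * B * w b)
      = Complex.exp (Complex.I * B * a) * (-(k : ℂ) * w a * (Real.sin (k * (b - a)) : ℂ)
        + (Da + Complex.I * B * w a) * (Real.cos (k * (b - a)) : ℂ)) := by
  set E : ℝ → ℂ := fun x => Complex.exp (Complex.I * B * (x : ℂ)) with hE_def
  have hE : ∀ x : ℝ, HasDerivAt E (Complex.I * B * E x) x := by
    intro x
    have h0 : HasDerivAt (fun z : ℂ => Complex.I * (B : ℂ) * z) (Complex.I * B) (x : ℂ) := by
      simpa using (hasDerivAt_id (x : ℂ)).const_mul (Complex.I * (B : ℂ))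
    have h1 : HasDerivAt (fun z : ℂ => Complex.exp (Complex.I * B * z))
        (Complex.exp (Complex.I * B * (x : ℂ)) * (Complex.I * B)) (x : ℂ) :=
      (Complex.hasDerivAt_exp _).comp _ h0
    have := h1.comp_ofReal
    rw [hE_def]
    convert this using 1
    ring
  have hEc : Continuous E := by
    apply Complex.continuous_exp.comp
    fun_prop
  set u : ℝ → ℂ := fun x => E x * w x with hu_def
  have hu : Continuous u := hEc.mul hw
  have hua : HasDerivWithinAt u (E a * (Da + Complex.I * B * w a)) (Set.Ioi a) a := by
    have h1 := (hE a).hasDerivWithinAt.mul ha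
    convert h1 using 1
    on_goal -1 => ring
    all_goals rfl
  have hub : HasDerivWithinAt u (E b * (Db + Complex.I * B * w b)) (Set.Iio b) b := by
    have h1 := (hE b).hasDerivWithinAt.mul hb
    convert h1 using 1
    on_goal -1 => ring
    all_goals rfl
  have hder : ∀ x ∈ Set.Ioo a b,
      HasDerivAt u (E x * (deriv w x + Complex.I * B * w x)) x := by
    intro x hx
    have h1 := (hE x).mul (hode x hx).1.hasDerivAt
    convert h1 using 1
    on_goal -1 => ring
    all_goals rfl
  have hode' : ∀ x ∈ Set.Ioo a b, DifferentiableAt ℝ u x ∧ DifferentiableAt ℝ (deriv u) x ∧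
      deriv (deriv u) x + (k : ℂ) ^ 2 * u x = 0 := by
    intro x hx
    obtain ⟨h1, h2, h3⟩ := hode x hx
    have hev : deriv u =ᶠ[nhds x] fun y => E y * (deriv w y + Complex.I * B * w y) := by
      filter_upwards [isOpen_Ioo.mem_nhds hx] with y hy using (hder y hy).deriv
    have hdiff2 : DifferentiableAt ℝ (fun y => E y * (deriv w y + Complex.I * B * w y)) x :=
      (hE x).differentiableAt.mul (h2.add (h1.const_mul _))
    refine ⟨(hder x hx).differentiableAt, hev.differentiableAt_iff.mpr hdiff2, ?_⟩
    have h4 : HasDerivAt (fun y => E y * (deriv w y + Complex.I * B * w y))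
        (Complex.I * B * E x * (deriv w x + Complex.I * B * w x)
          + E x * (deriv (deriv w) x + Complex.I * B * deriv w x)) x :=
      (hE x).mul (h2.hasDerivAt.add (h1.hasDerivAt.const_mul _))
    rw [hev.deriv_eq, h4.deriv]
    push_cast at h3 ⊢
    linear_combination (E x) * h3 + ((B : ℂ) ^ 2 * E x * w x) * Complex.I_sq
  obtain ⟨c1, c2⟩ := transfer0 k hk a b hab u hu _ _ hode' hua hub
  constructor
  · have h5 : E b * w b = (E a * w a) * (Real.cos (k * (b - a)) : ℂ)
        + (E a * (Da + Complex.I * B * w a)) / k * (Real.sin (k * (b - a)) : ℂ) := c1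
    rw [h5]
    ring
  · have h5 : E b * (Db + Complex.I * B * w b)
        = -(k : ℂ) * (E a * w a) * (Real.sin (k * (b - a)) : ℂ)
          + (E a * (Da + Complex.I * B * w a)) * (Real.cos (k * (b - a)) : ℂ) := c2
    rw [h5]
    ring

theorem duality_forward (A : ℝ) (hA : Real.cos (A * π) ≠ 0) (k : ℝ) (hk : 0 < k)
    (hks : Real.sin (k * π) ≠ 0) (α : ℤ → ℝ) (ψ φ : ℝ → ℂ)
    (hψc : Continuous ψ) (hφc : Continuous φ)
    (hψode : ∀ j : ℤ, ∀ x ∈ Set.Ioo ((j : ℝ) * π) (((j : ℝ) + 1) * π),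
      DifferentiableAt ℝ ψ x ∧ DifferentiableAt ℝ (deriv ψ) x ∧
      deriv (deriv ψ) x + 2 * Complex.I * (A : ℂ) * deriv ψ x
        + ((k ^ 2 - A ^ 2 : ℝ) : ℂ) * ψ x = 0)
    (hφode : ∀ j : ℤ, ∀ x ∈ Set.Ioo ((j : ℝ) * π) (((j : ℝ) + 1) * π),
      DifferentiableAt ℝ φ x ∧ DifferentiableAt ℝ (deriv φ) x ∧
      deriv (deriv φ) x - 2 * Complex.I * (A : ℂ) * deriv φ x
        + ((k ^ 2 - A ^ 2 : ℝ) : ℂ) * φ x = 0)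
    (Dψp Dψm Dφp Dφm : ℤ → ℂ)
    (hψp : ∀ j : ℤ, HasDerivWithinAt ψ (Dψp j) (Set.Ioi ((j : ℝ) * π)) ((j : ℝ) * π))
    (hψm : ∀ j : ℤ, HasDerivWithinAt ψ (Dψm j) (Set.Iio ((j : ℝ) * π)) ((j : ℝ) * π))
    (hφp : ∀ j : ℤ, HasDerivWithinAt φ (Dφp j) (Set.Ioi ((j : ℝ) * π)) ((j : ℝ) * π))
    (hφm : ∀ j : ℤ, HasDerivWithinAt φ (Dφm j) (Set.Iio ((j : ℝ) * π)) ((j : ℝ) * π))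
    (hmatch : ∀ j : ℤ, ψ ((j : ℝ) * π) = φ ((j : ℝ) * π))
    (hδ : ∀ j : ℤ, Dψp j + Dφp j - Dψm j - Dφm j = (α j : ℂ) * ψ ((j : ℝ) * π)) :
    ∀ j : ℤ, ψ (((j : ℝ) + 1) * π) + ψ (((j : ℝ) - 1) * π)
      = 2 * (((1 / Real.cos (A * π))
          * (Real.cos (k * π) + α j / (4 * k) * Real.sin (k * π)) : ℝ) : ℂ)
        * ψ ((j : ℝ) * π) := by
  -- φ satisfies the gauged equation with parameter −A
  have hφode2 : ∀ i : ℤ, ∀ x ∈ Set.Ioo ((i : ℝ) * π) (((i : ℝ) + 1) * π),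
      DifferentiableAt ℝ φ x ∧ DifferentiableAt ℝ (deriv φ) x ∧
      deriv (deriv φ) x + 2 * Complex.I * ((-A : ℝ) : ℂ) * deriv φ x
        + ((k ^ 2 - (-A) ^ 2 : ℝ) : ℂ) * φ x = 0 := by
    intro i x hx
    obtain ⟨d1, d2, d3⟩ := hφode i x hx
    refine ⟨d1, d2, ?_⟩
    push_cast at d3 ⊢
    linear_combination d3
  intro j
  have hπ := Real.pi_pos
  have h12 : (j : ℝ) * π < ((j : ℝ) + 1) * π := by nlinarith
  have h01 : ((j : ℝ) - 1) * π < (j : ℝ) * π := by nlinarith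
  have hkc : (k : ℂ) ≠ 0 := Complex.ofReal_ne_zero.mpr hk.ne'
  have hcA : (Real.cos (A * π) : ℂ) ≠ 0 := Complex.ofReal_ne_zero.mpr hA
  have hpy : (Real.cos (k * π) : ℂ) ^ 2 + (Real.sin (k * π) : ℂ) ^ 2 = 1 := by
    exact_mod_cast Real.cos_sq_add_sin_sq (k * π)
  -- cast fix for the interval (j−1, j)
  have ecast : Set.Ioo (((j - 1 : ℤ) : ℝ) * π) ((((j - 1 : ℤ) : ℝ) + 1) * π)
      = Set.Ioo (((j : ℝ) - 1) * π) ((j : ℝ) * π) := by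
    have e1 : ((j - 1 : ℤ) : ℝ) = (j : ℝ) - 1 := by push_cast; ring
    rw [e1, show ((j : ℝ) - 1 + 1) = (j : ℝ) from by ring]
  have hpm1 : HasDerivWithinAt ψ (Dψp (j - 1)) (Set.Ioi (((j : ℝ) - 1) * π))
      (((j : ℝ) - 1) * π) := by have h := hψp (j - 1); push_cast at h; exact h
  have hpm1φ : HasDerivWithinAt φ (Dφp (j - 1)) (Set.Ioi (((j : ℝ) - 1) * π))
      (((j : ℝ) - 1) * π) := by have h := hφp (j - 1); push_cast at h; exact h
  have hbm1 : HasDerivWithinAt ψ (Dψm (j + 1)) (Set.Iio (((j : ℝ) + 1) * π))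
      (((j : ℝ) + 1) * π) := by have h := hψm (j + 1); push_cast at h; exact h
  have hbm1φ : HasDerivWithinAt φ (Dφm (j + 1)) (Set.Iio (((j : ℝ) + 1) * π))
      (((j : ℝ) + 1) * π) := by have h := hφm (j + 1); push_cast at h; exact h
  have hm1 : ψ ((j : ℝ) * π) = φ ((j : ℝ) * π) := hmatch j
  have hm0 : ψ (((j : ℝ) - 1) * π) = φ (((j : ℝ) - 1) * π) := by
    have h := hmatch (j - 1); push_cast at h; exact h
  have hm2 : ψ (((j : ℝ) + 1) * π) = φ (((j : ℝ) + 1) * π) := by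
    have h := hmatch (j + 1); push_cast at h; exact h
  have hδj := hδ j
  -- transfer over (jπ, (j+1)π) for ψ and φ
  obtain ⟨A1, -⟩ := transfer k A hk ((j : ℝ) * π) (((j : ℝ) + 1) * π) h12 ψ hψc
    (Dψp j) (Dψm (j + 1)) (hψode j) (hψp j) hbm1
  obtain ⟨B1, -⟩ := transfer k (-A) hk ((j : ℝ) * π) (((j : ℝ) + 1) * π) h12 φ hφc
    (Dφp j) (Dφm (j + 1)) (hφode2 j) (hφp j) hbm1φ
  -- transfer over ((j−1)π, jπ) for ψ and φ
  obtain ⟨F1, F2⟩ := transfer k A hk (((j : ℝ) - 1) * π) ((j : ℝ) * π) h01 ψ hψc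
    (Dψp (j - 1)) (Dψm j) (fun x hx => hψode (j - 1) x (by rw [ecast]; exact hx)) hpm1 (hψm j)
  obtain ⟨G1, G2⟩ := transfer k (-A) hk (((j : ℝ) - 1) * π) ((j : ℝ) * π) h01 φ hφc
    (Dφp (j - 1)) (Dφm j) (fun x hx => hφode2 (j - 1) x (by rw [ecast]; exact hx)) hpm1φ (hφm j)
  -- normalize trig arguments
  rw [show k * (((j : ℝ) + 1) * π - (j : ℝ) * π) = k * π from by ring] at A1 B1
  rw [show k * ((j : ℝ) * π - ((j : ℝ) - 1) * π) = k * π from by ring] at F1 F2 G1 G2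
  -- split the exponentials
  have hsplit : ∀ B u v : ℝ, u + π = v →
      Complex.exp (Complex.I * (B : ℂ) * (v : ℂ))
        = Complex.exp (Complex.I * (B : ℂ) * (u : ℂ))
          * Complex.exp (Complex.I * (B : ℂ) * (π : ℂ)) := by
    intro B u v huv
    rw [← Complex.exp_add]
    congr 1
    rw [← huv]
    push_cast
    ring
  rw [hsplit A ((j : ℝ) * π) (((j : ℝ) + 1) * π) (by ring)] at A1
  rw [hsplit (-A) ((j : ℝ) * π) (((j : ℝ) + 1) * π) (by ring)] at B1
  rw [hsplit A (((j : ℝ) - 1) * π) ((j : ℝ) * π) (by ring)] at F1 F2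
  rw [hsplit (-A) (((j : ℝ) - 1) * π) ((j : ℝ) * π) (by ring)] at G1 G2
  set X : ℂ := Complex.exp (Complex.I * (A : ℂ) * (π : ℂ)) with hX_def
  set Y : ℂ := Complex.exp (Complex.I * ((-A : ℝ) : ℂ) * (π : ℂ)) with hY_def
  have hXY : X * Y = 1 := by
    rw [hX_def, hY_def, ← Complex.exp_add,
      show Complex.I * (A : ℂ) * (π : ℂ) + Complex.I * ((-A : ℝ) : ℂ) * (π : ℂ) = 0 from by
        push_cast; ring, Complex.exp_zero]
  have hXpY : X + Y = 2 * (Real.cos (A * π) : ℂ) := by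
    rw [hX_def, hY_def,
      show Complex.I * (A : ℂ) * (π : ℂ) = ((A * π : ℝ) : ℂ) * Complex.I from by push_cast; ring,
      show Complex.I * ((-A : ℝ) : ℂ) * (π : ℂ) = -((A * π : ℝ) : ℂ) * Complex.I from by
        push_cast; ring,
      Complex.exp_mul_I, Complex.exp_mul_I, Complex.cos_neg, Complex.sin_neg,
      ← Complex.ofReal_cos]
    ring
  -- clear denominators in the value relations
  have key : ∀ L E P Q R : ℂ, L = E * (P + Q / k * R) → L * k = E * (P * k + Q * R) := by
    intro L E P Q R h
    linear_combination (k : ℂ) * h + E * Q * R * (inv_mul_cancel₀ hkc)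
  replace A1 := key _ _ _ _ _ A1
  replace B1 := key _ _ _ _ _ B1
  replace F1 := key _ _ _ _ _ F1
  replace G1 := key _ _ _ _ _ G1
  push_cast at A1 B1 F1 F2 G1 G2
  rw [← hm1, ← hm2] at B1
  rw [← hm0, ← hm1] at G1
  rw [← hm0, ← hm1] at G2
  set c : ℂ := Complex.cos ((k : ℂ) * (π : ℂ)) with hc_def
  set s : ℂ := Complex.sin ((k : ℂ) * (π : ℂ)) with hs_def
  set ψ0 : ℂ := ψ (((j : ℝ) - 1) * π)
  set ψ1 : ℂ := ψ ((j : ℝ) * π)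
  set ψ2 : ℂ := ψ (((j : ℝ) + 1) * π)
  rw [show ∀ z : ℂ, Complex.I * -(A : ℂ) * z = -(Complex.I * (A : ℂ) * z) from fun z => by ring]
    at G2 B1 G1
  set Ea : ℂ := Complex.exp (Complex.I * (A : ℂ) * ((j : ℂ) * (π : ℂ))) with hEa_def
  set Eb : ℂ := Complex.exp (-(Complex.I * (A : ℂ) * ((j : ℂ) * (π : ℂ)))) with hEb_def
  set Fa : ℂ := Complex.exp (Complex.I * (A : ℂ) * (((j : ℂ) - 1) * (π : ℂ))) with hFa_def
  set Fb : ℂ := Complex.exp (-(Complex.I * (A : ℂ) * (((j : ℂ) - 1) * (π : ℂ)))) with hFb_def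
  have hE1 : Ea * Eb = 1 := by rw [hEa_def, hEb_def, ← Complex.exp_add]; simp
  have hpy2 : c ^ 2 + s ^ 2 = 1 := by rw [hc_def, hs_def]; exact Complex.cos_sq_add_sin_sq _
  have hE0 : Fa * Fb = 1 := by rw [hFa_def, hFb_def, ← Complex.exp_add]; simp
  have S1 : X * ψ2 * (k : ℂ) = ψ1 * c * k + (Dψp j + Complex.I * (A : ℂ) * ψ1) * s := by
    linear_combination Eb * A1
      - (X * ψ2 * (k : ℂ) - (ψ1 * c * (k : ℂ) + (Dψp j + Complex.I * (A : ℂ) * ψ1) * s)) * hE1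
  have S2 : Y * ψ2 * (k : ℂ) = ψ1 * c * k + (Dφp j - Complex.I * (A : ℂ) * ψ1) * s := by
    linear_combination Ea * B1
      - (Y * ψ2 * (k : ℂ) - (ψ1 * c * (k : ℂ) + (Dφp j - Complex.I * (A : ℂ) * ψ1) * s)) * hE1
  have S3 : X * ψ1 * (k : ℂ) = ψ0 * c * k + (Dψp (j - 1) + Complex.I * (A : ℂ) * ψ0) * s := by
    linear_combination Fb * F1
      - (X * ψ1 * (k : ℂ) - (ψ0 * c * (k : ℂ)
          + (Dψp (j - 1) + Complex.I * (A : ℂ) * ψ0) * s)) * hE0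
  have S4 : X * (Dψm j + Complex.I * (A : ℂ) * ψ1)
      = -(k : ℂ) * ψ0 * s + (Dψp (j - 1) + Complex.I * (A : ℂ) * ψ0) * c := by
    linear_combination Fb * F2
      - (X * (Dψm j + Complex.I * (A : ℂ) * ψ1) - (-(k : ℂ) * ψ0 * s
          + (Dψp (j - 1) + Complex.I * (A : ℂ) * ψ0) * c)) * hE0
  have S5 : Y * ψ1 * (k : ℂ) = ψ0 * c * k + (Dφp (j - 1) - Complex.I * (A : ℂ) * ψ0) * s := by
    linear_combination Fa * G1
      - (Y * ψ1 * (k : ℂ) - (ψ0 * c * (k : ℂ)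
          + (Dφp (j - 1) - Complex.I * (A : ℂ) * ψ0) * s)) * hE0
  have S6 : Y * (Dφm j - Complex.I * (A : ℂ) * ψ1)
      = -(k : ℂ) * ψ0 * s + (Dφp (j - 1) - Complex.I * (A : ℂ) * ψ0) * c := by
    linear_combination Fa * G2
      - (Y * (Dφm j - Complex.I * (A : ℂ) * ψ1) - (-(k : ℂ) * ψ0 * s
          + (Dφp (j - 1) - Complex.I * (A : ℂ) * ψ0) * c)) * hE0
  have S7 : X * (ψ1 * c * (k : ℂ) - (Dψm j + Complex.I * (A : ℂ) * ψ1) * s) = (k : ℂ) * ψ0 := by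
    linear_combination c * S3 - s * S4 + (k : ℂ) * ψ0 * hpy2
  have S8 : Y * (ψ1 * c * (k : ℂ) - (Dφm j - Complex.I * (A : ℂ) * ψ1) * s) = (k : ℂ) * ψ0 := by
    linear_combination c * S5 - s * S6 + (k : ℂ) * ψ0 * hpy2
  have S9 : Y * ψ0 * (k : ℂ) = ψ1 * c * k - (Dψm j + Complex.I * (A : ℂ) * ψ1) * s := by
    linear_combination (-Y) * S7
      + (ψ1 * c * (k : ℂ) - (Dψm j + Complex.I * (A : ℂ) * ψ1) * s) * hXY
  have S10 : X * ψ0 * (k : ℂ) = ψ1 * c * k - (Dφm j - Complex.I * (A : ℂ) * ψ1) * s := by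
    linear_combination (-X) * S8
      + (ψ1 * c * (k : ℂ) - (Dφm j - Complex.I * (A : ℂ) * ψ1) * s) * hXY
  have SS : (X + Y) * (ψ2 + ψ0) * (k : ℂ) = 4 * ψ1 * c * k + (α j : ℂ) * ψ1 * s := by
    linear_combination S1 + S2 + S9 + S10 + s * hδj
  rw [hXpY] at SS
  have hcc : ((Real.cos (k * π) : ℝ) : ℂ) = c := by
    rw [hc_def, Complex.ofReal_cos, Complex.ofReal_mul]
  have hss : ((Real.sin (k * π) : ℝ) : ℂ) = s := by
    rw [hs_def, Complex.ofReal_sin, Complex.ofReal_mul]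
  have hcast : ((1 / Real.cos (A * π)
        * (Real.cos (k * π) + α j / (4 * k) * Real.sin (k * π)) : ℝ) : ℂ)
      = 1 / ((Real.cos (A * π) : ℝ) : ℂ)
        * (((Real.cos (k * π) : ℝ) : ℂ)
          + (α j : ℂ) / (4 * (k : ℂ)) * ((Real.sin (k * π) : ℝ) : ℂ)) := by
    push_cast
    ring
  rw [hcast, hcc, hss]
  apply mul_left_cancel₀
    (show (2 : ℂ) * ((Real.cos (A * π) : ℝ) : ℂ) * (k : ℂ) ≠ 0 from
      mul_ne_zero (mul_ne_zero two_ne_zero hcA) hkc)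
  have hRHS : (2 : ℂ) * ((Real.cos (A * π) : ℝ) : ℂ) * (k : ℂ)
      * (2 * (1 / ((Real.cos (A * π) : ℝ) : ℂ) * (c + (α j : ℂ) / (4 * (k : ℂ)) * s)) * ψ1)
      = 4 * ψ1 * c * (k : ℂ) + (α j : ℂ) * ψ1 * s := by
    have hcA2 : Complex.cos ((A : ℂ) * (π : ℂ)) ≠ 0 := by
      rw [show (A : ℂ) * (π : ℂ) = ((A * π : ℝ) : ℂ) from by push_cast; ring,
        ← Complex.ofReal_cos]
      exact hcA
    field_simp [hcA2]
    ring
  rw [hRHS]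
  linear_combination SS
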